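/- (Frobenius reciprocity) Let (S,F,L) be a p-local finite group, Γ = Γ_{p'}(F) (or Γ_p(F)), H ≤ K ≤ Γ, and A a system of ring coefficients on L. For x ∈ lim^*_{L_K} ι_K*A and y ∈ lim^*_{L_H} ι_H*A, the transfer satisfies Tr^K_H(Res^K_H(x) · y) = x · Tr^K_H(y), where · denotes the cup product. -/

import Mathlib

open CategoryTheory

/-- Skeletal data of a (quasi)centric linking system of a `p`-local finite group, as used
in [Levi–Ragnarsson]: a small category `L` with distinguished object `S`, the projection
functor `Θ̂ : L ⥤ B(Γ)` onto (the one-object category of) the group `Γ = Γ_{p'}(F)`,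
an image factorization of every morphism into an isomorphism followed by an "inclusion"
(inclusions being collapsed to the identity by `Θ̂`), surjectivity of
`Aut_L(S) → Γ`, and restrictions of automorphisms of `S` to every object. -/
structure LinkingData (L : Type) [SmallCategory L] (Γ : Type) [Group Γ] where
  S : L
  Θ : L ⥤ SingleObj Γ
  im : ∀ {P Q : L}, (P ⟶ Q) → L
  restr : ∀ {P Q : L} (f : P ⟶ Q), P ⟶ im f
  incl : ∀ {P Q : L} (f : P ⟶ Q), im f ⟶ Q
  restr_isIso : ∀ {P Q : L} (f : P ⟶ Q), IsIso (restr f)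
  fac : ∀ {P Q : L} (f : P ⟶ Q), restr f ≫ incl f = f
  theta_incl : ∀ {P Q : L} (f : P ⟶ Q), (show Γ from Θ.map (incl f)) = 1
  im_of_isIso : ∀ {P Q : L} (f : P ⟶ Q), IsIso f → im f = Q
  incl_of_isIso : ∀ {P Q : L} (f : P ⟶ Q) (h : IsIso f), incl f = eqToHom (im_of_isIso f h)
  theta_surj : ∀ γ : Γ, ∃ e : S ⟶ S, IsIso e ∧ (show Γ from Θ.map e) = γ
  conjObj : Γ → L → L
  conjMor : ∀ (γ : Γ) (P : L), conjObj γ P ⟶ P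
  conjMor_isIso : ∀ (γ : Γ) (P : L), IsIso (conjMor γ P)
  theta_conjMor : ∀ (γ : Γ) (P : L), (show Γ from Θ.map (conjMor γ P)) = γ

variable {L : Type} [SmallCategory L] {Γ : Type} [Group Γ]

/-- The underlying type of the wide subcategory `L_H ⊆ L` of morphisms whose image under
`Θ̂` lies in the subgroup `H ≤ Γ`; this is the linking system of the subsystem of index
prime to `p` corresponding to `H`. -/
def LSub (_D : LinkingData L Γ) (_H : Subgroup Γ) : Type := L

instance LSub.category (D : LinkingData L Γ) (H : Subgroup Γ) : Category (LSub D H) where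
  Hom X Y := {f : (show L from X) ⟶ (show L from Y) // (show Γ from D.Θ.map f) ∈ H}
  id X := ⟨𝟙 (show L from X), by
    have : (show Γ from D.Θ.map (𝟙 (show L from X))) = 1 := by rw [D.Θ.map_id]; rfl
    rw [this]; exact H.one_mem⟩
  comp {X Y Z} f g := ⟨f.1 ≫ g.1, by
    have : (show Γ from D.Θ.map (f.1 ≫ g.1)) =
        (show Γ from D.Θ.map g.1) * (show Γ from D.Θ.map f.1) := by
      rw [D.Θ.map_comp]; rfl
    rw [this]; exact H.mul_mem g.2 f.2⟩
  id_comp f := by apply Subtype.ext; exact Category.id_comp f.1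
  comp_id f := by apply Subtype.ext; exact Category.comp_id f.1
  assoc f g h := by apply Subtype.ext; exact Category.assoc f.1 g.1 h.1

/-- The inclusion functor `ι : L_H ⥤ L`. -/
def LSub.ι (D : LinkingData L Γ) (H : Subgroup Γ) : LSub D H ⥤ L where
  obj X := X
  map f := f.1

/-- The conjugate `u^γ` of a cochain with values in a system of ring coefficients
`A : L ⥤ CommRing`, given by `(u^γ)_P = A(α)(u_{α⁻¹(P)})` for `α` with `Θ̂(α) = γ`. -/
noncomputable def conjFamRing (D : LinkingData L Γ) (A : L ⥤ CommRingCat) (γ : Γ)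
    (u : ∀ P : L, A.obj P) : ∀ P : L, A.obj P :=
  fun P => A.map (D.conjMor γ P) (u (D.conjObj γ P))

/-- The transfer `Tr^K_H(u) = Σ_{ḡ ∈ K/H} u^g` of a cochain, for subgroups `H ≤ K ≤ Γ`. -/
noncomputable def trFamRing (D : LinkingData L Γ) (A : L ⥤ CommRingCat)
    (H K : Subgroup Γ) (u : ∀ P : L, A.obj P) : ∀ P : L, A.obj P :=
  fun P => ∑ᶠ q : ↥K ⧸ H.subgroupOf K, conjFamRing D A ((Quotient.out q : ↥K) : Γ) u P

/-- **Frobenius reciprocity.** For a `p`-local finite group `(S,F,L)` with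
`Γ = Γ_{p'}(F)`, subgroups `H ≤ K ≤ Γ` and a system of ring coefficients `A` on `L`,
the transfer satisfies `Tr^K_H(Res^K_H(x)·y) = x·Tr^K_H(y)`:  at the cochain level, for a
cochain `u` natural on `L_K` and a cochain `v` natural on `L_H`,
`Tr^K_H(u·v) = u·Tr^K_H(v)` (the restriction `Res^K_H u` being `u` itself). -/
theorem frobenius_reciprocity
    (D : LinkingData L Γ) (H K : Subgroup Γ) (hHK : H ≤ K) [Finite Γ]
    (A : L ⥤ CommRingCat)
    (u : ∀ P : L, A.obj P)
    (hu : ∀ {P Q : L} (ψ : P ⟶ Q),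
      (show Γ from D.Θ.map ψ) ∈ K → A.map ψ (u P) = u Q)
    (v : ∀ P : L, A.obj P)
    (hv : ∀ {P Q : L} (ψ : P ⟶ Q),
      (show Γ from D.Θ.map ψ) ∈ H → A.map ψ (v P) = v Q) :
    ∀ P : L,
      trFamRing D A H K (fun Q => u Q * v Q) P = u P * trFamRing D A H K v P := by
  intro P
  unfold trFamRing
  have key : ∀ q : ↥K ⧸ H.subgroupOf K,
      conjFamRing D A ((Quotient.out q : ↥K) : Γ) (fun Q => u Q * v Q) P
        = u P * conjFamRing D A ((Quotient.out q : ↥K) : Γ) v P := by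
    intro q
    unfold conjFamRing
    rw [map_mul]
    congr 1
    exact hu _ (by rw [D.theta_conjMor]; exact (Quotient.out q).2)
  simp_rw [key]
  exact (mul_finsum' _ _ (Set.toFinite _)).symm
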